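/- For every real number θ, the two linear vector fields ((2 + sin²θ)X − (cos θ sin θ)Y, −(cos θ sin θ)X + (2 + cos²θ)Y) and (−(2 cos θ sin θ)X + (2 cos²θ)Y, −(2 sin²θ)X + (2 cos θ sin θ)Y) form a basis of the subspace {ξ ∈ V₁ : ξ is 1-liftably tangent to c_θ}, i.e., of the kernel of the first reduced Kodaira–Spencer–Mather map ₁ω̄c_θ of the rotated cusp c_θ. -/

import Mathlib

open Polynomial

/-- First component of the rotated cusp `c_θ(x) = R_θ (x², x³)` as a polynomial over `K`. -/
noncomputable def cusp1 (K : Type*) [RCLike K] (θ : ℝ) : Polynomial K :=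
  C ((Real.cos θ : K)) * X ^ 2 - C ((Real.sin θ : K)) * X ^ 3

/-- Second component of the rotated cusp. -/
noncomputable def cusp2 (K : Type*) [RCLike K] (θ : ℝ) : Polynomial K :=
  C ((Real.sin θ : K)) * X ^ 2 + C ((Real.cos θ : K)) * X ^ 3

/-- First component of the derivative `c_θ'(x)`. -/
noncomputable def dcusp1 (K : Type*) [RCLike K] (θ : ℝ) : Polynomial K :=
  C ((Real.cos θ : K)) * (2 * X) - C ((Real.sin θ : K)) * (3 * X ^ 2)

/-- Second component of the derivative `c_θ'(x)`. -/
noncomputable def dcusp2 (K : Type*) [RCLike K] (θ : ℝ) : Polynomial K :=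
  C ((Real.sin θ : K)) * (2 * X) + C ((Real.cos θ : K)) * (3 * X ^ 2)

/-- Composition `P(c_θ(x))` of a two-variable polynomial with the rotated cusp. -/
noncomputable def cuspEval (K : Type*) [RCLike K] (θ : ℝ) (P : MvPolynomial (Fin 2) K) :
    Polynomial K :=
  MvPolynomial.aeval ![cusp1 K θ, cusp2 K θ] P

/-- `ξ = (P, Q)` is `i`-liftably tangent to the rotated cusp `c_θ`:
there is `η ∈ K[x]` with `x^(2i+2)` dividing both `P(c_θ(x)) - η(x)·c_θ'(x)₁`
and `Q(c_θ(x)) - η(x)·c_θ'(x)₂`.  This characterizes the kernel of the `i`-th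
reduced Kodaira–Spencer–Mather map of the cusp `c_θ`. -/
def LiftTang (K : Type*) [RCLike K] (i : ℕ) (θ : ℝ)
    (ξ : MvPolynomial (Fin 2) K × MvPolynomial (Fin 2) K) : Prop :=
  ∃ η : Polynomial K,
    (X : Polynomial K) ^ (2 * i + 2) ∣ cuspEval K θ ξ.1 - η * dcusp1 K θ ∧
    (X : Polynomial K) ^ (2 * i + 2) ∣ cuspEval K θ ξ.2 - η * dcusp2 K θ

/-- `V_i`: pairs of homogeneous polynomials of degree `i` in `K[X, Y]`,
identified with the jet space `m₀^i θ₀(2)/m₀^(i+1) θ₀(2)`. -/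
noncomputable def Vsp (K : Type*) [RCLike K] (i : ℕ) :
    Submodule K (MvPolynomial (Fin 2) K × MvPolynomial (Fin 2) K) :=
  (MvPolynomial.homogeneousSubmodule (Fin 2) K i).prod
    (MvPolynomial.homogeneousSubmodule (Fin 2) K i)

/-- A family of angles is admissible if the difference of any two distinct members
is not an integer multiple of `π`. -/
def Admissible {n : ℕ} (θ : Fin n → ℝ) : Prop :=
  ∀ j k, j ≠ k → ∀ m : ℤ, θ j - θ k ≠ m * Real.pi

open MvPolynomial in
/-- The linear vector field `((2 + sin²θ)X − (cos θ sin θ)Y, −(cos θ sin θ)X + (2 + cos²θ)Y)`. -/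
noncomputable def kerVec1 (K : Type*) [RCLike K] (θ : ℝ) :
    MvPolynomial (Fin 2) K × MvPolynomial (Fin 2) K :=
  (MvPolynomial.C (((2 + Real.sin θ ^ 2 : ℝ) : K)) * X 0 - MvPolynomial.C (((Real.cos θ * Real.sin θ : ℝ) : K)) * X 1,
   -(MvPolynomial.C (((Real.cos θ * Real.sin θ : ℝ) : K)) * X 0)
     + MvPolynomial.C (((2 + Real.cos θ ^ 2 : ℝ) : K)) * X 1)

open MvPolynomial in
/-- The linear vector field `(−(2 cos θ sin θ)X + (2 cos²θ)Y, −(2 sin²θ)X + (2 cos θ sin θ)Y)`. -/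
noncomputable def kerVec2 (K : Type*) [RCLike K] (θ : ℝ) :
    MvPolynomial (Fin 2) K × MvPolynomial (Fin 2) K :=
  (-(MvPolynomial.C (((2 * (Real.cos θ * Real.sin θ) : ℝ) : K)) * X 0)
     + MvPolynomial.C (((2 * Real.cos θ ^ 2 : ℝ) : K)) * X 1,
   -(MvPolynomial.C (((2 * Real.sin θ ^ 2 : ℝ) : K)) * X 0)
     + MvPolynomial.C (((2 * (Real.cos θ * Real.sin θ) : ℝ) : K)) * X 1)

-- auxiliary
lemma pythK (K : Type*) [RCLike K] (θ : ℝ) :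
    ((Real.cos θ : K))^2 + ((Real.sin θ : K))^2 = 1 := by
  have h := Real.sin_sq_add_cos_sq θ
  have h2 : ((Real.sin θ ^ 2 + Real.cos θ ^ 2 : ℝ) : K) = ((1:ℝ) : K) := by rw [h]
  push_cast at h2
  linear_combination h2

lemma pythC (K : Type*) [RCLike K] (θ : ℝ) :
    (C ((Real.cos θ : K)))^2 + (C ((Real.sin θ : K)))^2 = (1 : Polynomial K) := by
  have h := congrArg (Polynomial.C (R := K)) (pythK K θ)
  simpa only [map_add, map_pow, map_one] using h

lemma liftTang_kerVec1 (K : Type*) [RCLike K] (θ : ℝ) : LiftTang K 1 θ (kerVec1 K θ) := by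
  refine ⟨X, ?_, ?_⟩
  · have h : cuspEval K θ (kerVec1 K θ).1 - X * dcusp1 K θ = 0 := by
      simp only [kerVec1, cuspEval, map_sub, map_mul, MvPolynomial.aeval_X,
        MvPolynomial.aeval_C, Matrix.cons_val_zero, Matrix.cons_val_one, Matrix.head_cons,
        algebraMap_eq]
      push_cast
      simp only [map_add, map_mul, map_pow, map_ofNat, cusp1, cusp2, dcusp1]
      linear_combination (-(C ((Real.sin θ : K))) * X^3) * pythC K θ
    rw [h]; exact dvd_zero _
  · have h : cuspEval K θ (kerVec1 K θ).2 - X * dcusp2 K θ = 0 := by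
      simp only [kerVec1, cuspEval, map_add, map_neg, map_mul, MvPolynomial.aeval_X,
        MvPolynomial.aeval_C, Matrix.cons_val_zero, Matrix.cons_val_one, Matrix.head_cons,
        algebraMap_eq]
      push_cast
      simp only [map_add, map_mul, map_pow, map_ofNat, cusp1, cusp2, dcusp2]
      linear_combination ((C ((Real.cos θ : K))) * X^3) * pythC K θ
    rw [h]; exact dvd_zero _

lemma liftTang_kerVec2 (K : Type*) [RCLike K] (θ : ℝ) : LiftTang K 1 θ (kerVec2 K θ) := by
  refine ⟨X^2, ?_, ?_⟩
  · refine ⟨3 * C ((Real.sin θ : K)), ?_⟩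
    simp only [kerVec2, cuspEval, map_add, map_neg, map_mul, MvPolynomial.aeval_X,
      MvPolynomial.aeval_C, Matrix.cons_val_zero, Matrix.cons_val_one, Matrix.head_cons,
      algebraMap_eq]
    push_cast
    simp only [map_add, map_mul, map_pow, map_ofNat, cusp1, cusp2, dcusp1]
    linear_combination (2*(C ((Real.cos θ : K)))*X^3) * pythC K θ
  · refine ⟨-(3 * C ((Real.cos θ : K))), ?_⟩
    simp only [kerVec2, cuspEval, map_add, map_neg, map_mul, MvPolynomial.aeval_X,
      MvPolynomial.aeval_C, Matrix.cons_val_zero, Matrix.cons_val_one, Matrix.head_cons,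
      algebraMap_eq]
    push_cast
    simp only [map_add, map_mul, map_pow, map_ofNat, cusp1, cusp2, dcusp2]
    linear_combination (2*(C ((Real.sin θ : K)))*X^3) * pythC K θ

lemma fin2_degree_one {d : Fin 2 →₀ ℕ} (h : Finsupp.degree d = 1) :
    d = Finsupp.single 0 1 ∨ d = Finsupp.single 1 1 := by
  have hd : d 0 + d 1 = 1 := by
    rw [Finsupp.degree_apply, Finset.sum_subset (Finset.subset_univ d.support) (by
      intro x _ hx; simpa using Finsupp.notMem_support_iff.mp hx), Fin.sum_univ_two] at h
    exact h
  rcases Nat.add_eq_one_iff.mp hd with ⟨h0, h1⟩ | ⟨h0, h1⟩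
  · right; ext i; fin_cases i <;> simp [h0, h1]
  · left; ext i; fin_cases i <;> simp [h0, h1]

open MvPolynomial in
lemma homog1_decomp {K : Type*} [CommSemiring K] {P : MvPolynomial (Fin 2) K}
    (h : P ∈ homogeneousSubmodule (Fin 2) K 1) :
    P = MvPolynomial.C (coeff (Finsupp.single 0 1) P) * X 0
        + MvPolynomial.C (coeff (Finsupp.single 1 1) P) * X 1 := by
  rw [mem_homogeneousSubmodule] at h
  apply MvPolynomial.ext
  intro m
  rw [MvPolynomial.coeff_add, MvPolynomial.coeff_C_mul, MvPolynomial.coeff_C_mul,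
    MvPolynomial.coeff_X', MvPolynomial.coeff_X']
  by_cases h0 : Finsupp.single (0 : Fin 2) 1 = m
  · have hne : ¬ (Finsupp.single (1 : Fin 2) 1 = m) := by
      rw [← h0]; intro hc
      have := DFunLike.congr_fun hc (0 : Fin 2); simp at this
    simp [h0, hne]
  · by_cases h1 : Finsupp.single (1 : Fin 2) 1 = m
    · simp [h0, h1]
    · simp only [h0, h1, if_false, mul_zero, add_zero]
      by_contra hc
      have hdeg := h.coeff_eq_zero (d := m) ?_
      · exact hc hdeg
      · intro hd
        rcases fin2_degree_one hd with h' | h'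
        · exact h0 h'.symm
        · exact h1 h'.symm

lemma cuspEval_linear (K : Type*) [RCLike K] (θ : ℝ) (a b : K) :
    cuspEval K θ (MvPolynomial.C a * MvPolynomial.X 0 + MvPolynomial.C b * MvPolynomial.X 1)
      = C a * cusp1 K θ + C b * cusp2 K θ := by
  simp [cuspEval, MvPolynomial.aeval_X, algebraMap_eq]

open MvPolynomial in
lemma memVsp_kerVec1 (K : Type*) [RCLike K] (θ : ℝ) : kerVec1 K θ ∈ Vsp K 1 := by
  refine Submodule.mem_prod.mpr ⟨?_, ?_⟩
  · rw [mem_homogeneousSubmodule]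
    exact ((isHomogeneous_X K 0).C_mul _).sub ((isHomogeneous_X K 1).C_mul _)
  · rw [mem_homogeneousSubmodule]
    exact (((isHomogeneous_X K 0).C_mul _).neg).add ((isHomogeneous_X K 1).C_mul _)

open MvPolynomial in
lemma memVsp_kerVec2 (K : Type*) [RCLike K] (θ : ℝ) : kerVec2 K θ ∈ Vsp K 1 := by
  refine Submodule.mem_prod.mpr ⟨?_, ?_⟩ <;>
    · rw [mem_homogeneousSubmodule]
      exact (((isHomogeneous_X K 0).C_mul _).neg).add ((isHomogeneous_X K 1).C_mul _)

lemma indep_kerVec (K : Type*) [RCLike K] (θ : ℝ) :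
    LinearIndependent K ![kerVec1 K θ, kerVec2 K θ] := by
  rw [LinearIndependent.pair_iff]
  intro α β h
  have h1 := congrArg (fun p => MvPolynomial.eval ![(1:K),0] p.1) h
  have h2 := congrArg (fun p => MvPolynomial.eval ![(0:K),1] p.1) h
  have h3 := congrArg (fun p => MvPolynomial.eval ![(1:K),0] p.2) h
  have h4 := congrArg (fun p => MvPolynomial.eval ![(0:K),1] p.2) h
  simp only [kerVec1, kerVec2, Prod.fst_add, Prod.snd_add, Prod.smul_fst, Prod.smul_snd,
    MvPolynomial.smul_eval, map_add, map_sub, map_neg, map_mul, MvPolynomial.eval_C,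
    MvPolynomial.eval_X, Matrix.cons_val_zero, Matrix.cons_val_one, Matrix.head_cons,
    Prod.fst_zero, Prod.snd_zero, MvPolynomial.eval_zero, smul_eq_mul,
    mul_zero, mul_one, zero_mul, one_mul, add_zero, zero_add, sub_zero, zero_sub,
    map_zero] at h1 h2 h3 h4
  push_cast at h1 h2 h3 h4
  simp only [RCLike.algebraMap_eq_ofReal] at h1 h2 h3 h4
  constructor
  · linear_combination (1/5) * h1 + (1/5) * h4 - (α/5) * pythK K θ
  · linear_combination (1/2) * h2 - (1/2) * h3 - β * pythK K θ

lemma span_kerVec (K : Type*) [RCLike K] (θ : ℝ)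
    (ξ : MvPolynomial (Fin 2) K × MvPolynomial (Fin 2) K)
    (hmem : ξ ∈ Vsp K 1) (hlift : LiftTang K 1 θ ξ) :
    ∃ s t : K, ξ = s • kerVec1 K θ + t • kerVec2 K θ := by
  rw [Vsp, Submodule.mem_prod] at hmem
  obtain ⟨hm1, hm2⟩ := hmem
  set cc : K := ((Real.cos θ : K)) with hccdef
  set ss : K := ((Real.sin θ : K)) with hssdef
  set a : K := MvPolynomial.coeff (Finsupp.single 0 1) ξ.1 with hadef
  set b : K := MvPolynomial.coeff (Finsupp.single 1 1) ξ.1 with hbdef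
  set d : K := MvPolynomial.coeff (Finsupp.single 0 1) ξ.2 with hddef
  set e : K := MvPolynomial.coeff (Finsupp.single 1 1) ξ.2 with hedef
  have hx1 := homog1_decomp hm1
  have hx2 := homog1_decomp hm2
  obtain ⟨η, hdv1, hdv2⟩ := hlift
  rw [show 2*1+2 = 4 from rfl, Polynomial.X_pow_dvd_iff] at hdv1 hdv2
  rw [hx1, cuspEval_linear] at hdv1
  rw [hx2, cuspEval_linear] at hdv2
  have hr1 : η * dcusp1 K θ = C (2*cc) * (η * X^1) - C (3*ss) * (η * X^2) := by
    rw [dcusp1]; simp only [map_mul, map_ofNat]; ring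
  have hr2 : η * dcusp2 K θ = C (2*ss) * (η * X^1) + C (3*cc) * (η * X^2) := by
    rw [dcusp2]; simp only [map_mul, map_ofNat]; ring
  rw [hr1] at hdv1
  rw [hr2] at hdv2
  have A1 := hdv1 1 (by norm_num)
  have A2 := hdv1 2 (by norm_num)
  have A3 := hdv1 3 (by norm_num)
  have B1 := hdv2 1 (by norm_num)
  have B2 := hdv2 2 (by norm_num)
  have B3 := hdv2 3 (by norm_num)
  simp only [cusp1, cusp2, coeff_sub, coeff_add, coeff_C_mul, coeff_mul_X_pow',
    coeff_X_pow] at A1 A2 A3 B1 B2 B3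
  norm_num at A1 A2 A3 B1 B2 B3
  have pyth : cc^2 + ss^2 = 1 := pythK K θ
  have he0 : η.coeff 0 = 0 := by
    rcases A1 with h | h
    · rcases B1 with h' | h'
      · exfalso; rw [hccdef] at h; rw [hssdef] at h'
        rw [hccdef, hssdef, h, h'] at pyth; simp at pyth
      · exact h'
    · exact h
  have H1 : a*cc*ss + b*ss^2 - d*cc^2 - e*cc*ss = 0 := by
    linear_combination ss*A2 - cc*B2 - (3*ss^2+3*cc^2)*he0
  have f1 : 2*η.coeff 1 = a*cc^2+(b+d)*cc*ss+e*ss^2 := by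
    linear_combination (-cc)*A2 - ss*B2 - 2*(η.coeff 1)*pyth
  have f2 : 3*η.coeff 1 = a*ss^2-(b+d)*cc*ss+e*cc^2 := by
    linear_combination ss*A3 - cc*B3 - 3*(η.coeff 1)*pyth
  have H2 : 3*(a*cc^2+(b+d)*cc*ss+e*ss^2) - 2*(a*ss^2-(b+d)*cc*ss+e*cc^2) = 0 := by
    linear_combination 2*f2 - 3*f1
  set s : K := (a+e)/5 with hs
  set t : K := (b-d)/2 with ht
  have ha : a = s*(2+ss^2) - 2*cc*ss*t := by
    linear_combination (2*cc*ss)*H1 + ((cc^2-ss^2)/5)*H2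
      + ((2/5)*e - (3/5)*a + (3/5)*ss^2*e - (2/5)*ss^2*a + cc*ss*d - cc*ss*b
         + (2/5)*cc^2*e - (3/5)*cc^2*a)*pyth
      - (2+ss^2)*hs + (2*cc*ss)*ht
  have hb : b = -(s*(cc*ss)) + 2*cc^2*t := by
    linear_combination (ss^2-cc^2)*H1 + ((2/5)*cc*ss)*H2
      + (-b - ss^2*b - (1/5)*cc*ss*e - (1/5)*cc*ss*a - cc^2*d)*pyth
      + (cc*ss)*hs - (2*cc^2)*ht
  have hd : d = -(s*(cc*ss)) - 2*ss^2*t := by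
    linear_combination (ss^2-cc^2)*H1 + ((2/5)*cc*ss)*H2
      + (-d - ss^2*b - (1/5)*cc*ss*e - (1/5)*cc*ss*a - cc^2*d)*pyth
      + (cc*ss)*hs + (2*ss^2)*ht
  have he : e = s*(2+cc^2) + 2*cc*ss*t := by
    linear_combination (-(2*cc*ss))*H1 + (-(cc^2-ss^2)/5)*H2
      + (-(3/5)*e + (2/5)*a - (3/5)*ss^2*e + (2/5)*ss^2*a - cc*ss*d + cc*ss*b
         - (2/5)*cc^2*e + (3/5)*cc^2*a)*pyth
      - (2+cc^2)*hs - (2*cc*ss)*ht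
  refine ⟨s, t, ?_⟩
  have hCa := congrArg (MvPolynomial.C (σ := Fin 2) (R := K)) ha
  have hCb := congrArg (MvPolynomial.C (σ := Fin 2) (R := K)) hb
  have hCd := congrArg (MvPolynomial.C (σ := Fin 2) (R := K)) hd
  have hCe := congrArg (MvPolynomial.C (σ := Fin 2) (R := K)) he
  simp only [map_add, map_sub, map_mul, map_neg, map_pow, map_ofNat] at hCa hCb hCd hCe
  rw [Prod.ext_iff]
  constructor
  · show ξ.1 = _
    rw [hx1]
    simp only [Prod.fst_add, Prod.smul_fst, kerVec1, kerVec2, MvPolynomial.smul_eq_C_mul]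
    push_cast
    simp only [map_add, map_sub, map_mul, map_neg, map_pow, map_ofNat]
    linear_combination (MvPolynomial.X (R := K) 0)*hCa + (MvPolynomial.X (R := K) 1)*hCb
  · show ξ.2 = _
    rw [hx2]
    simp only [Prod.snd_add, Prod.smul_snd, kerVec1, kerVec2, MvPolynomial.smul_eq_C_mul]
    push_cast
    simp only [map_add, map_sub, map_mul, map_neg, map_pow, map_ofNat]
    linear_combination (MvPolynomial.X (R := K) 0)*hCd + (MvPolynomial.X (R := K) 1)*hCe

/-- For every real `θ`, the two linear vector fields `kerVec1 K θ` and `kerVec2 K θ` form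
a basis of `{ξ ∈ V₁ : ξ is 1-liftably tangent to c_θ}`, the kernel of the first reduced
Kodaira–Spencer–Mather map `₁ω̄c_θ` of the rotated cusp. -/
theorem basis_of_kernel_for_rotated_cusp (K : Type*) [RCLike K] (θ : ℝ) :
    (kerVec1 K θ ∈ Vsp K 1 ∧ LiftTang K 1 θ (kerVec1 K θ)) ∧
    (kerVec2 K θ ∈ Vsp K 1 ∧ LiftTang K 1 θ (kerVec2 K θ)) ∧
    LinearIndependent K ![kerVec1 K θ, kerVec2 K θ] ∧
    ∀ ξ : MvPolynomial (Fin 2) K × MvPolynomial (Fin 2) K,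
      ξ ∈ Vsp K 1 → LiftTang K 1 θ ξ →
      ∃ s t : K, ξ = s • kerVec1 K θ + t • kerVec2 K θ := by
  exact ⟨⟨memVsp_kerVec1 K θ, liftTang_kerVec1 K θ⟩,
    ⟨memVsp_kerVec2 K θ, liftTang_kerVec2 K θ⟩,
    indep_kerVec K θ, span_kerVec K θ⟩
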